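/- Let p, q : α → ℝ be nonnegative functions on a finite type α with ∑ p = 1, and let W > 0 be a constant with p(x) + W*q(x) > 0 for all x. Then the function D ↦ ∑ x, p(x)*log(D(x)) + W*q(x)*log(1 - D(x)), over functions D : α → (0,1), is maximized by D*(x) = p(x)/(p(x) + W*q(x)). -/

import Mathlib

lemma aux_sub (c S s : ℝ) (hc : 0 ≤ c) (hS : 0 < S) (hs : 0 < s) :
    c * Real.log s ≤ c * Real.log (c / S) + (s * S - c) := by
  rcases hc.eq_or_lt with h | h
  · simp [← h]
    positivity
  · have key : Real.log (s * S / c) ≤ s * S / c - 1 :=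
      Real.log_le_sub_one_of_pos (by positivity)
    have h2 : Real.log (s * S / c) = Real.log s - Real.log (c / S) := by
      rw [Real.log_div (by positivity) (ne_of_gt h), Real.log_mul (ne_of_gt hs) (ne_of_gt hS),
        Real.log_div (ne_of_gt h) (ne_of_gt hS)]
      ring
    have h3 : c * Real.log (s * S / c) ≤ c * (s * S / c - 1) :=
      mul_le_mul_of_nonneg_left key hc
    rw [h2] at h3
    have h4 : c * (s * S / c - 1) = s * S - c := by field_simp
    nlinarith [h3]

lemma aux_pt (a b t : ℝ) (ha : 0 ≤ a) (hb : 0 ≤ b) (hab : 0 < a + b)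
    (ht : 0 < t) (ht1 : t < 1) :
    a * Real.log t + b * Real.log (1 - t) ≤
    a * Real.log (a / (a + b)) + b * Real.log (1 - a / (a + b)) := by
  have h1 : 1 - a / (a + b) = b / (a + b) := by field_simp; ring
  rw [h1]
  have hA := aux_sub a (a + b) t ha hab ht
  have hB := aux_sub b (a + b) (1 - t) hb hab (by linarith)
  nlinarith [hA, hB]

theorem stmt_6 {α : Type*} [Fintype α] (p q : α → ℝ) (W : ℝ)
    (hp : ∀ x, 0 ≤ p x) (hq : ∀ x, 0 ≤ q x)
    (hps : ∑ x, p x = 1) (hW : 0 < W)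
    (hpq : ∀ x, 0 < p x + W * q x)
    (D : α → ℝ) (hD : ∀ x, D x ∈ Set.Ioo (0 : ℝ) 1) :
    ∑ x, (p x * Real.log (D x) + W * q x * Real.log (1 - D x)) ≤
    ∑ x, (p x * Real.log (p x / (p x + W * q x)) +
          W * q x * Real.log (1 - p x / (p x + W * q x))) := by
  apply Finset.sum_le_sum
  intro x _
  exact aux_pt (p x) (W * q x) (D x) (hp x) (mul_nonneg hW.le (hq x)) (hpq x)
    (hD x).1 (hD x).2
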